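/- Let p ≥ 2 be an integer, j ∈ ℤ, and q := exp(iπ/p) ∈ ℂ. Define the braiding matrix entries q₁₁ := −1, q₁₂ := (−1)^j q⁻¹, q₂₁ := (−1)^j q⁻¹, q₂₂ := q², and the real numbers x₁₁ := 1, x₁₂ := −(jp+1)/p, x₂₂ := 2(jp+1)/p. Then: (i) exp(iπ·x₁₁) = q₁₁, exp(iπ·x₂₂) = q₂₂, and exp(2iπ·x₁₂) = q₁₂·q₂₁; (ii) q₁₂·q₂₁·q₂₂ = 1 and q₁₂·q₂₁ = q⁻² is a primitive p-th root of unity; (iii) with the A₂ Cartan matrix (a₁₁ = a₂₂ = 2, a₁₂ = a₂₁ = −1), the conditions (1 − a₁₂)·x₁₁ = 2 and a₂₁·x₂₂ = 2·x₁₂ hold, so for each pair i ≠ j at least one of the alternatives a_{ij}·x_{ii} = 2·x_{ij} or (1 − a_{ij})·x_{ii} = 2 is satisfied. -/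

import Mathlib

/-- the asymmetric momentum data `R_asymm(j)` solves the equations
relating screening momenta to the braiding matrix `Q_asymm`. -/
theorem asymm_momenta_solve_braiding_equations
    (p : ℕ) (hp : 2 ≤ p) (j : ℤ)
    (q : ℂ) (hq : q = Complex.exp ((Real.pi : ℂ) * Complex.I / p))
    (q11 q12 q21 q22 : ℂ)
    (hq11 : q11 = -1)
    (hq12 : q12 = (-1 : ℂ) ^ j * q⁻¹)
    (hq21 : q21 = (-1 : ℂ) ^ j * q⁻¹)
    (hq22 : q22 = q ^ 2)
    (x11 x12 x22 : ℝ)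
    (hx11 : x11 = 1)
    (hx12 : x12 = -(((j * p + 1 : ℤ) : ℝ)) / p)
    (hx22 : x22 = 2 * ((j * p + 1 : ℤ) : ℝ) / p) :
    (Complex.exp ((Real.pi : ℂ) * Complex.I * (x11 : ℂ)) = q11 ∧
     Complex.exp ((Real.pi : ℂ) * Complex.I * (x22 : ℂ)) = q22 ∧
     Complex.exp (2 * (Real.pi : ℂ) * Complex.I * (x12 : ℂ)) = q12 * q21) ∧
    (q12 * q21 * q22 = 1 ∧ q12 * q21 = q ^ (-2 : ℤ) ∧
     IsPrimitiveRoot (q12 * q21) p) ∧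
    ((1 - (-1 : ℝ)) * x11 = 2 ∧ (-1 : ℝ) * x22 = 2 * x12 ∧
     (((-1 : ℝ) * x11 = 2 * x12 ∨ (1 - (-1 : ℝ)) * x11 = 2) ∧
      ((-1 : ℝ) * x22 = 2 * x12 ∨ (1 - (-1 : ℝ)) * x22 = 2))) := by
  have hpR : (p : ℝ) ≠ 0 := by positivity
  have hpC : (p : ℂ) ≠ 0 := by exact_mod_cast Nat.cast_ne_zero.mpr (by omega)
  have hqne : q ≠ 0 := by rw [hq]; exact Complex.exp_ne_zero _
  -- (-1)^j * (-1)^j = 1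
  have hneg : ((-1 : ℂ) ^ j) * ((-1 : ℂ) ^ j) = 1 := by
    rw [← zpow_add₀ (by norm_num : (-1 : ℂ) ≠ 0)]
    have : j + j = 2 * j := by ring
    rw [this, zpow_mul]
    norm_num
  -- q12 * q21 = q⁻²
  have hprod : q12 * q21 = q ^ (-2 : ℤ) := by
    rw [hq12, hq21]
    have : (-1 : ℂ) ^ j * q⁻¹ * ((-1 : ℂ) ^ j * q⁻¹)
        = ((-1 : ℂ) ^ j * (-1 : ℂ) ^ j) * (q⁻¹ * q⁻¹) := by ring
    rw [this, hneg, one_mul, zpow_neg, zpow_two, mul_inv]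
  -- q² = exp(2πI/p)
  have hq2 : q ^ 2 = Complex.exp (2 * (Real.pi : ℂ) * Complex.I / p) := by
    rw [hq, ← Complex.exp_nat_mul]
    ring_nf
  -- first block
  refine ⟨⟨?_, ?_, ?_⟩, ⟨?_, hprod, ?_⟩, ?_, ?_, ?_, ?_⟩
  · rw [hx11, hq11]; push_cast
    rw [mul_one]; exact Complex.exp_pi_mul_I
  · rw [hx22, hq22, hq2]
    push_cast
    have : (Real.pi : ℂ) * Complex.I * (2 * ((j : ℂ) * p + 1) / p)
        = (j : ℤ) * (2 * Real.pi * Complex.I) + 2 * Real.pi * Complex.I / p := by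
      field_simp
    rw [this, Complex.exp_add, Complex.exp_int_mul_two_pi_mul_I, one_mul]
  · rw [hx12, hprod]
    push_cast
    have h1 : 2 * (Real.pi : ℂ) * Complex.I * (-((j : ℂ) * p + 1) / p)
        = (-j : ℤ) * (2 * Real.pi * Complex.I) + (-2 : ℤ) * ((Real.pi : ℂ) * Complex.I / p) := by
      field_simp; push_cast; ring
    rw [h1, Complex.exp_add, Complex.exp_int_mul_two_pi_mul_I, one_mul,
      Complex.exp_int_mul, ← hq]
  · rw [hprod, hq22]
    rw [zpow_neg, zpow_two, ← sq]
    field_simp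
  · rw [hprod]
    have hprim : IsPrimitiveRoot (q ^ 2) p := by
      rw [hq2]
      have := Complex.isPrimitiveRoot_exp p (by omega)
      convert this using 2
    have h2 := hprim.inv
    rwa [zpow_neg, zpow_two, ← sq]
  · rw [hx11]; norm_num
  · rw [hx22, hx12]; push_cast; field_simp
  · right; rw [hx11]; norm_num
  · left; rw [hx22, hx12]; push_cast; field_simp
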